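/- Let M = [[0, xᵀ, a, 0],[y, 0, 0, 0],[b, 0, 0, zᵀ],[0, 0, w, 0]] with a, b ∈ ℂ nonzero, x, y ∈ ℂᵐ, z, w ∈ ℂⁿ. Set s = x*x, u = y*y, t = z*z, v = w*w. If s, u, t, v are all nonzero, then N = [[0, u⁻¹y*, 0, 0],[s⁻¹ x̄, 0, 0, -s⁻¹ a v⁻¹ x̄ w*],[0, 0, 0, v⁻¹ w*],[0, -t⁻¹ b u⁻¹ z̄ y*, t⁻¹ z̄, 0]] is the Moore–Penrose inverse of M: MNM = M, NMN = N, (MN)* = MN, (NM)* = NM. -/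

import Mathlib

open Matrix BigOperators

noncomputable section

abbrev Idx (m n : ℕ) := (Unit ⊕ Fin m) ⊕ (Unit ⊕ Fin n)

/-- 4×4 block builder for matrices indexed by a double star digraph vertex set:
the blocks correspond to the first center, the first star's leaves, the second
center and the second star's leaves, in this order. -/
def blk {m n : ℕ}
    (A11 : ℂ) (A12 : Fin m → ℂ) (A13 : ℂ) (A14 : Fin n → ℂ)
    (A21 : Fin m → ℂ) (A22 : Fin m → Fin m → ℂ) (A23 : Fin m → ℂ) (A24 : Fin m → Fin n → ℂ)
    (A31 : ℂ) (A32 : Fin m → ℂ) (A33 : ℂ) (A34 : Fin n → ℂ)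
    (A41 : Fin n → ℂ) (A42 : Fin n → Fin m → ℂ) (A43 : Fin n → ℂ) (A44 : Fin n → Fin n → ℂ) :
    Matrix (Idx m n) (Idx m n) ℂ :=
  Matrix.of fun i j =>
    match i, j with
    | .inl (.inl _), .inl (.inl _) => A11
    | .inl (.inl _), .inl (.inr k) => A12 k
    | .inl (.inl _), .inr (.inl _) => A13
    | .inl (.inl _), .inr (.inr k) => A14 k
    | .inl (.inr i'), .inl (.inl _) => A21 i'
    | .inl (.inr i'), .inl (.inr k) => A22 i' k
    | .inl (.inr i'), .inr (.inl _) => A23 i'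
    | .inl (.inr i'), .inr (.inr k) => A24 i' k
    | .inr (.inl _), .inl (.inl _) => A31
    | .inr (.inl _), .inl (.inr k) => A32 k
    | .inr (.inl _), .inr (.inl _) => A33
    | .inr (.inl _), .inr (.inr k) => A34 k
    | .inr (.inr i'), .inl (.inl _) => A41 i'
    | .inr (.inr i'), .inl (.inr k) => A42 i' k
    | .inr (.inr i'), .inr (.inl _) => A43 i'
    | .inr (.inr i'), .inr (.inr k) => A44 i' k

/-- The canonical matrix `[[0, xᵀ, a, 0],[y, 0, 0, 0],[b, 0, 0, zᵀ],[0, 0, w, 0]]`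
associated with a double star digraph. -/
def dsM {m n : ℕ} (a b : ℂ) (x y : Fin m → ℂ) (z w : Fin n → ℂ) :
    Matrix (Idx m n) (Idx m n) ℂ :=
  blk 0 x a (fun _ => 0)
      y (fun _ _ => 0) (fun _ => 0) (fun _ _ => 0)
      b (fun _ => 0) 0 z
      (fun _ => 0) (fun _ _ => 0) w (fun _ _ => 0)

/-- `xᵀy`. -/
def dotT {k : ℕ} (x y : Fin k → ℂ) : ℂ := ∑ i, x i * y i

/-- `x*x = ∑ conj xᵢ · xᵢ`. -/
def gram {k : ℕ} (x : Fin k → ℂ) : ℂ := ∑ i, star (x i) * x i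

end

noncomputable section
lemma sum_smul_star' {k : ℕ} (x : Fin k → ℂ) (c : ℂ) :
    ∑ i, x i * (c * (starRingEnd ℂ) (x i)) = c * gram x := by
  rw [_root_.gram, Finset.mul_sum]; exact Finset.sum_congr rfl fun i _ => by rw [Complex.star_def]; ring

lemma sum_smul_star {k : ℕ} (x : Fin k → ℂ) (c d : ℂ) :
    ∑ i, x i * (c * (starRingEnd ℂ) (x i) * d) = c * gram x * d := by
  rw [_root_.gram, Finset.mul_sum, Finset.sum_mul]; exact Finset.sum_congr rfl fun i _ => by rw [Complex.star_def]; ring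

lemma sum_star_mul {k : ℕ} (x : Fin k → ℂ) (c : ℂ) :
    ∑ i, c * (starRingEnd ℂ) (x i) * x i = c * gram x := by
  rw [_root_.gram, Finset.mul_sum]; exact Finset.sum_congr rfl fun i _ => by rw [Complex.star_def]; ring

lemma star_gram {k : ℕ} (x : Fin k → ℂ) : star (gram x) = gram x := by
  simp [_root_.gram, mul_comm]

def dsN {m n : ℕ} (a b : ℂ) (x y : Fin m → ℂ) (z w : Fin n → ℂ) :
    Matrix (Idx m n) (Idx m n) ℂ :=
  blk 0 (fun i => (gram y)⁻¹ * star (y i)) 0 (fun _ => 0)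
        (fun i => (gram x)⁻¹ * star (x i)) (fun _ _ => 0) (fun _ => 0)
          (fun i j => -((gram x)⁻¹ * a * (gram w)⁻¹) * star (x i) * star (w j))
        0 (fun _ => 0) 0 (fun j => (gram w)⁻¹ * star (w j))
        (fun _ => 0) (fun i j => -((gram z)⁻¹ * b * (gram y)⁻¹) * star (z i) * star (y j))
          (fun i => (gram z)⁻¹ * star (z i)) (fun _ _ => 0)

set_option maxHeartbeats 2000000 in
lemma hMN {m n : ℕ} (a b : ℂ) (x y : Fin m → ℂ) (z w : Fin n → ℂ)
    (hs : gram x ≠ 0) (hu : gram y ≠ 0) (ht : gram z ≠ 0) (hv : gram w ≠ 0) :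
    dsM a b x y z w * dsN a b x y z w
    = blk 1 (fun _ => 0) 0 (fun _ => 0)
        (fun _ => 0) (fun i j => (gram y)⁻¹ * (y i * star (y j))) (fun _ => 0) (fun _ _ => 0)
        0 (fun _ => 0) 1 (fun _ => 0)
        (fun _ => 0) (fun _ _ => 0) (fun _ => 0)
          (fun i j => (gram w)⁻¹ * (w i * star (w j))) := by
  ext i j
  rcases i with (i|i)|(i|i) <;> rcases j with (j|j)|(j|j) <;>
      simp [dsM, dsN, blk, mul_apply, Fintype.sum_sum_type, sum_smul_star, sum_smul_star'] <;>
    field_simp <;> ring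

set_option maxHeartbeats 2000000 in
lemma hNM {m n : ℕ} (a b : ℂ) (x y : Fin m → ℂ) (z w : Fin n → ℂ)
    (hs : gram x ≠ 0) (hu : gram y ≠ 0) (ht : gram z ≠ 0) (hv : gram w ≠ 0) :
    dsN a b x y z w * dsM a b x y z w
    = blk 1 (fun _ => 0) 0 (fun _ => 0)
        (fun _ => 0) (fun i j => (gram x)⁻¹ * (star (x i) * x j)) (fun _ => 0) (fun _ _ => 0)
        0 (fun _ => 0) 1 (fun _ => 0)
        (fun _ => 0) (fun _ _ => 0) (fun _ => 0)
          (fun i j => (gram z)⁻¹ * (star (z i) * z j)) := by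
  ext i j
  rcases i with (i|i)|(i|i) <;> rcases j with (j|j)|(j|j) <;>
      simp [dsM, dsN, blk, mul_apply, Fintype.sum_sum_type, sum_star_mul] <;>
    field_simp <;> ring

lemma collect {k : ℕ} (x : Fin k → ℂ) {f : Fin k → ℂ} (c : ℂ)
    (h : ∀ i, f i = c * ((starRingEnd ℂ) (x i) * x i)) :
    ∑ i, f i = c * gram x := by
  rw [_root_.gram, Finset.mul_sum]
  exact Finset.sum_congr rfl fun i _ => (h i).trans (by rw [Complex.star_def])


set_option maxHeartbeats 2000000 in
lemma hPM {m n : ℕ} (a b : ℂ) (x y : Fin m → ℂ) (z w : Fin n → ℂ)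
    (hs : gram x ≠ 0) (hu : gram y ≠ 0) (ht : gram z ≠ 0) (hv : gram w ≠ 0) :
    (blk 1 (fun _ => 0) 0 (fun _ => 0)
        (fun _ => 0) (fun i j => (gram y)⁻¹ * (y i * star (y j))) (fun _ => 0) (fun _ _ => 0)
        0 (fun _ => 0) 1 (fun _ => 0)
        (fun _ => 0) (fun _ _ => 0) (fun _ => 0)
          (fun i j => (gram w)⁻¹ * (w i * star (w j))) : Matrix (Idx m n) (Idx m n) ℂ)
      * dsM a b x y z w = dsM a b x y z w := by
  ext i j
  rcases i with (i|i)|(i|i) <;> rcases j with (j|j)|(j|j) <;>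
      simp [dsM, blk, mul_apply, Fintype.sum_sum_type]
  · exact (collect y ((gram y)⁻¹ * y i)
      (fun j => by ring)).trans (by field_simp <;> ring)
  · exact (collect w ((gram w)⁻¹ * w i)
      (fun j => by ring)).trans (by field_simp <;> ring)

set_option maxHeartbeats 2000000 in
lemma hQN {m n : ℕ} (a b : ℂ) (x y : Fin m → ℂ) (z w : Fin n → ℂ)
    (hs : gram x ≠ 0) (hu : gram y ≠ 0) (ht : gram z ≠ 0) (hv : gram w ≠ 0) :
    (blk 1 (fun _ => 0) 0 (fun _ => 0)
        (fun _ => 0) (fun i j => (gram x)⁻¹ * (star (x i) * x j)) (fun _ => 0) (fun _ _ => 0)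
        0 (fun _ => 0) 1 (fun _ => 0)
        (fun _ => 0) (fun _ _ => 0) (fun _ => 0)
          (fun i j => (gram z)⁻¹ * (star (z i) * z j)) : Matrix (Idx m n) (Idx m n) ℂ)
      * dsN a b x y z w = dsN a b x y z w := by
  ext i j
  rcases i with (i|i)|(i|i) <;> rcases j with (j|j)|(j|j) <;>
      simp [dsN, blk, mul_apply, Fintype.sum_sum_type]
  · exact (collect x ((gram x)⁻¹ * (starRingEnd ℂ) (x i) * (gram x)⁻¹)
      (fun j => by ring)).trans (by field_simp <;> ring)
  · exact (collect x ((gram x)⁻¹ * (starRingEnd ℂ) (x i) *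
      ((gram x)⁻¹ * a * (gram w)⁻¹ * (starRingEnd ℂ) (w j)))
      (fun k => by ring)).trans (by field_simp <;> ring)
  · exact (collect z ((gram z)⁻¹ * (starRingEnd ℂ) (z i) *
      ((gram z)⁻¹ * b * (gram y)⁻¹ * (starRingEnd ℂ) (y j)))
      (fun k => by ring)).trans (by field_simp <;> ring)
  · exact (collect z ((gram z)⁻¹ * (starRingEnd ℂ) (z i) * (gram z)⁻¹)
      (fun j => by ring)).trans (by field_simp <;> ring)

lemma conj_gram {k : ℕ} (x : Fin k → ℂ) : (starRingEnd ℂ) (gram x) = gram x := by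
  rw [← Complex.star_def]; exact star_gram x

lemma hermP {m n : ℕ} (y : Fin m → ℂ) (w : Fin n → ℂ) :
    (blk 1 (fun _ => 0) 0 (fun _ => 0)
        (fun _ => 0) (fun i j => (gram y)⁻¹ * (y i * star (y j))) (fun _ => 0) (fun _ _ => 0)
        0 (fun _ => 0) 1 (fun _ => 0)
        (fun _ => 0) (fun _ _ => 0) (fun _ => 0)
          (fun i j => (gram w)⁻¹ * (w i * star (w j))) : Matrix (Idx m n) (Idx m n) ℂ)ᴴ
    = blk 1 (fun _ => 0) 0 (fun _ => 0)
        (fun _ => 0) (fun i j => (gram y)⁻¹ * (y i * star (y j))) (fun _ => 0) (fun _ _ => 0)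
        0 (fun _ => 0) 1 (fun _ => 0)
        (fun _ => 0) (fun _ _ => 0) (fun _ => 0)
          (fun i j => (gram w)⁻¹ * (w i * star (w j))) := by
  ext i j
  rcases i with (i|i)|(i|i) <;> rcases j with (j|j)|(j|j) <;>
      simp [blk, conjTranspose_apply, _root_.map_mul, map_inv₀, conj_gram] <;> first
      | (left; ring)
      | ring

lemma hermQ {m n : ℕ} (x : Fin m → ℂ) (z : Fin n → ℂ) :
    (blk 1 (fun _ => 0) 0 (fun _ => 0)
        (fun _ => 0) (fun i j => (gram x)⁻¹ * (star (x i) * x j)) (fun _ => 0) (fun _ _ => 0)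
        0 (fun _ => 0) 1 (fun _ => 0)
        (fun _ => 0) (fun _ _ => 0) (fun _ => 0)
          (fun i j => (gram z)⁻¹ * (star (z i) * z j)) : Matrix (Idx m n) (Idx m n) ℂ)ᴴ
    = blk 1 (fun _ => 0) 0 (fun _ => 0)
        (fun _ => 0) (fun i j => (gram x)⁻¹ * (star (x i) * x j)) (fun _ => 0) (fun _ _ => 0)
        0 (fun _ => 0) 1 (fun _ => 0)
        (fun _ => 0) (fun _ _ => 0) (fun _ => 0)
          (fun i j => (gram z)⁻¹ * (star (z i) * z j)) := by
  ext i j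
  rcases i with (i|i)|(i|i) <;> rcases j with (j|j)|(j|j) <;>
      simp [blk, conjTranspose_apply, _root_.map_mul, map_inv₀, conj_gram] <;> first
      | (left; ring)
      | ring

end

theorem dsM_moore_penrose {m n : ℕ} (a b : ℂ) (ha : a ≠ 0) (hb : b ≠ 0)
    (x y : Fin m → ℂ) (z w : Fin n → ℂ)
    (hs : gram x ≠ 0) (hu : gram y ≠ 0) (ht : gram z ≠ 0) (hv : gram w ≠ 0) :
    letI M := dsM a b x y z w
    letI N := blk 0 (fun i => (gram y)⁻¹ * star (y i)) 0 (fun _ => 0)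
        (fun i => (gram x)⁻¹ * star (x i)) (fun _ _ => 0) (fun _ => 0)
          (fun i j => -((gram x)⁻¹ * a * (gram w)⁻¹) * star (x i) * star (w j))
        0 (fun _ => 0) 0 (fun j => (gram w)⁻¹ * star (w j))
        (fun _ => 0) (fun i j => -((gram z)⁻¹ * b * (gram y)⁻¹) * star (z i) * star (y j))
          (fun i => (gram z)⁻¹ * star (z i)) (fun _ _ => 0)
    M * N * M = M ∧ N * M * N = N ∧ (M * N)ᴴ = M * N ∧ (N * M)ᴴ = N * M := by
  have e1 := hMN a b x y z w hs hu ht hv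
  have e2 := hNM a b x y z w hs hu ht hv
  have e3 := hPM a b x y z w hs hu ht hv
  have e4 := hQN a b x y z w hs hu ht hv
  refine ⟨?_, ?_, ?_, ?_⟩
  · show dsM a b x y z w * dsN a b x y z w * dsM a b x y z w = dsM a b x y z w
    rw [e1, e3]
  · show dsN a b x y z w * dsM a b x y z w * dsN a b x y z w = dsN a b x y z w
    rw [e2, e4]
  · show (dsM a b x y z w * dsN a b x y z w)ᴴ = dsM a b x y z w * dsN a b x y z w
    rw [e1, hermP]
  · show (dsN a b x y z w * dsM a b x y z w)ᴴ = dsN a b x y z w * dsM a b x y z w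
    rw [e2, hermQ]
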